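/- arXiv:1909.06985 — 6 statements merged into one kernel-verified Lean document; each statement's English description precedes it below -/
import Mathlib

section
/- Let X₁ be an m₁ × n₁ complex matrix and X₂ an m₂ × n₂ complex matrix, each with at least two columns and all columns nonzero. Then the mutual coherence of the Kronecker product W = X₁ ⊗ X₂ satisfies μ(W) = max{μ(X₁), μ(X₂)}. -/
open scoped BigOperators

noncomputable section

/-- The standard Hermitian inner product on ℂ^ι. -/
def vHerm {ι : Type*} [Fintype ι] (u v : ι → ℂ) : ℂ := ∑ i, star (u i) * v i

/-- The Euclidean norm on ℂ^ι. -/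
def vNorm {ι : Type*} [Fintype ι] (u : ι → ℂ) : ℝ := Real.sqrt (∑ i, ‖u i‖ ^ 2)

/-- The mutual coherence of a matrix: the largest value of
`|⟨θ_i, θ_j⟩| / (‖θ_i‖₂ ‖θ_j‖₂)` over pairs of distinct columns `θ_i, θ_j`. -/
def mutualCoherence {m n : Type*} [Fintype m] (Θ : Matrix m n ℂ) : ℝ :=
  sSup {x : ℝ | ∃ i j : n, i ≠ j ∧
    x = ‖vHerm (fun k => Θ k i) (fun k => Θ k j)‖ /
      (vNorm (fun k => Θ k i) * vNorm (fun k => Θ k j))}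

set_option linter.unusedSectionVars false

section aux
variable {ι κ : Type*} [Fintype ι] [Fintype κ]
lemma vNorm_nonneg (u : ι → ℂ) : 0 ≤ vNorm u := Real.sqrt_nonneg _
lemma vNorm_eq_norm (u : ι → ℂ) : vNorm u = ‖(WithLp.equiv 2 (ι → ℂ)).symm u‖ := by
  rw [EuclideanSpace.norm_eq]; rfl
lemma vHerm_eq_inner (u v : ι → ℂ) :
    vHerm u v = inner ℂ ((WithLp.equiv 2 (ι → ℂ)).symm u) ((WithLp.equiv 2 (ι → ℂ)).symm v) := by
  simp [vHerm, PiLp.inner_apply, RCLike.inner_apply, mul_comm]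
lemma abs_vHerm_le (u v : ι → ℂ) : ‖vHerm u v‖ ≤ vNorm u * vNorm v := by
  rw [vHerm_eq_inner, vNorm_eq_norm, vNorm_eq_norm]
  exact norm_inner_le_norm _ _
lemma vNorm_pos {u : ι → ℂ} (h : ∃ i, u i ≠ 0) : 0 < vNorm u := by
  obtain ⟨i, hi⟩ := h
  exact Real.sqrt_pos.2 (Finset.sum_pos' (fun j _ => by positivity)
    ⟨i, Finset.mem_univ _, pow_pos (norm_pos_iff.2 hi) 2⟩)
lemma abs_vHerm_self (u : ι → ℂ) : ‖vHerm u u‖ = vNorm u ^ 2 := by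
  have h : vHerm u u = ((∑ i, ‖u i‖ ^ 2 : ℝ) : ℂ) := by
    unfold vHerm
    push_cast
    refine Finset.sum_congr rfl fun i _ => ?_
    rw [Complex.star_def, ← Complex.normSq_eq_conj_mul_self, Complex.normSq_eq_norm_sq]
    push_cast; ring
  rw [h, Complex.norm_of_nonneg (by positivity), vNorm,
    Real.sq_sqrt (by positivity)]
lemma vHerm_kron (u₁ v₁ : ι → ℂ) (u₂ v₂ : κ → ℂ) :
    vHerm (fun p : ι × κ => u₁ p.1 * u₂ p.2) (fun p : ι × κ => v₁ p.1 * v₂ p.2) =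
      vHerm u₁ v₁ * vHerm u₂ v₂ := by
  unfold vHerm
  rw [Fintype.sum_prod_type, Finset.sum_mul_sum]
  refine Finset.sum_congr rfl fun a _ => Finset.sum_congr rfl fun b _ => ?_
  simp only [star_mul']; ring
lemma vNorm_kron (u : ι → ℂ) (v : κ → ℂ) :
    vNorm (fun p : ι × κ => u p.1 * v p.2) = vNorm u * vNorm v := by
  unfold vNorm
  rw [← Real.sqrt_mul (by positivity), Fintype.sum_prod_type, Finset.sum_mul_sum]
  congr 1
  refine Finset.sum_congr rfl fun a _ => Finset.sum_congr rfl fun b _ => ?_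
  rw [norm_mul, mul_pow]
end aux

/-- coherence value of a pair of columns -/
def coh {m n : Type*} [Fintype m] (Θ : Matrix m n ℂ) (i j : n) : ℝ :=
  ‖vHerm (fun k => Θ k i) (fun k => Θ k j)‖ /
    (vNorm (fun k => Θ k i) * vNorm (fun k => Θ k j))

section coh
variable {m n : Type*} [Fintype m] [Fintype n] (Θ : Matrix m n ℂ)

lemma mutualCoherence_eq : mutualCoherence Θ = sSup {x : ℝ | ∃ i j : n, i ≠ j ∧ x = coh Θ i j} := rfl

lemma S_finite : Set.Finite {x : ℝ | ∃ i j : n, i ≠ j ∧ x = coh Θ i j} :=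
  Set.Finite.subset (Set.finite_range fun p : n × n => coh Θ p.1 p.2)
    (by rintro x ⟨i, j, -, rfl⟩; exact ⟨(i, j), rfl⟩)

lemma coh_nonneg (i j : n) : 0 ≤ coh Θ i j :=
  div_nonneg (norm_nonneg _) (mul_nonneg (vNorm_nonneg _) (vNorm_nonneg _))

lemma coh_le_one {i j : n} (hi : ∃ k, Θ k i ≠ 0) (hj : ∃ k, Θ k j ≠ 0) : coh Θ i j ≤ 1 := by
  rw [coh, div_le_one (mul_pos (vNorm_pos hi) (vNorm_pos hj))]
  exact abs_vHerm_le _ _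

lemma coh_self {i : n} (hi : ∃ k, Θ k i ≠ 0) : coh Θ i i = 1 := by
  rw [coh, abs_vHerm_self, sq]
  exact div_self (mul_pos (vNorm_pos hi) (vNorm_pos hi)).ne'

lemma coh_le_mu {i j : n} (h : i ≠ j) : coh Θ i j ≤ mutualCoherence Θ :=
  le_csSup (S_finite Θ).bddAbove ⟨i, j, h, rfl⟩

lemma mu_mem (h : ∃ i j : n, i ≠ j) :
    ∃ i j : n, i ≠ j ∧ mutualCoherence Θ = coh Θ i j := by
  obtain ⟨i, j, hij⟩ := h
  have hS : {x : ℝ | ∃ i j : n, i ≠ j ∧ x = coh Θ i j}.Nonempty :=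
    ⟨coh Θ i j, i, j, hij, rfl⟩
  exact hS.csSup_mem (S_finite Θ)

lemma mu_le (h : ∃ i j : n, i ≠ j) {M : ℝ} (hM : ∀ i j : n, i ≠ j → coh Θ i j ≤ M) :
    mutualCoherence Θ ≤ M := by
  obtain ⟨i, j, hij⟩ := h
  exact csSup_le ⟨_, ⟨i, j, hij, rfl⟩⟩ (by rintro x ⟨a, b, hab, rfl⟩; exact hM a b hab)
end coh

lemma coh_kron {m₁ n₁ m₂ n₂ : ℕ} (X₁ : Matrix (Fin m₁) (Fin n₁) ℂ)
    (X₂ : Matrix (Fin m₂) (Fin n₂) ℂ) (p q : Fin n₁ × Fin n₂) :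
    coh (Matrix.kroneckerMap (· * ·) X₁ X₂) p q = coh X₁ p.1 q.1 * coh X₂ p.2 q.2 := by
  have hcol : ∀ j : Fin n₁ × Fin n₂,
      (fun k : Fin m₁ × Fin m₂ => Matrix.kroneckerMap (· * ·) X₁ X₂ k j) =
        fun k => X₁ k.1 j.1 * X₂ k.2 j.2 := fun j => rfl
  unfold coh
  rw [hcol, hcol,
    vHerm_kron (fun a => X₁ a p.1) (fun a => X₁ a q.1) (fun b => X₂ b p.2) (fun b => X₂ b q.2),
    vNorm_kron (fun a => X₁ a p.1) (fun b => X₂ b p.2),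
    vNorm_kron (fun a => X₁ a q.1) (fun b => X₂ b q.2), norm_mul]
  ring

/-- For matrices `X₁`, `X₂` with at least two columns each and all columns nonzero,
the mutual coherence of the Kronecker product `W = X₁ ⊗ X₂` satisfies
`μ(W) = max {μ(X₁), μ(X₂)}`. -/
theorem mutualCoherence_kronecker {m₁ n₁ m₂ n₂ : ℕ}
    (X₁ : Matrix (Fin m₁) (Fin n₁) ℂ) (X₂ : Matrix (Fin m₂) (Fin n₂) ℂ)
    (hn₁ : 2 ≤ n₁) (hn₂ : 2 ≤ n₂)
    (hc₁ : ∀ j, ∃ i, X₁ i j ≠ 0) (hc₂ : ∀ j, ∃ i, X₂ i j ≠ 0) :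
    mutualCoherence (Matrix.kroneckerMap (· * ·) X₁ X₂) =
      max (mutualCoherence X₁) (mutualCoherence X₂) := by
  set W := Matrix.kroneckerMap (· * ·) X₁ X₂ with hW
  set a : Fin n₁ := ⟨0, by omega⟩
  set b : Fin n₁ := ⟨1, by omega⟩
  set c : Fin n₂ := ⟨0, by omega⟩
  set d : Fin n₂ := ⟨1, by omega⟩
  have hab : a ≠ b := by simp [a, b, Fin.ext_iff]
  have hcd : c ≠ d := by simp [c, d, Fin.ext_iff]
  have hcW : ∀ j : Fin n₁ × Fin n₂, ∃ k, W k j ≠ 0 := by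
    intro j
    obtain ⟨k₁, h1⟩ := hc₁ j.1
    obtain ⟨k₂, h2⟩ := hc₂ j.2
    exact ⟨(k₁, k₂), mul_ne_zero h1 h2⟩
  have hpairW : ∃ p q : Fin n₁ × Fin n₂, p ≠ q :=
    ⟨(a, c), (b, c), fun h => hab (congrArg Prod.fst h)⟩
  have h01 : (0 : ℝ) ≤ mutualCoherence X₁ :=
    le_trans (coh_nonneg X₁ a b) (coh_le_mu X₁ hab)
  have h02 : (0 : ℝ) ≤ mutualCoherence X₂ :=
    le_trans (coh_nonneg X₂ c d) (coh_le_mu X₂ hcd)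
  apply le_antisymm
  · refine mu_le W hpairW ?_
    intro p q hpq
    rw [hW, coh_kron]
    by_cases h1 : p.1 = q.1
    · have h2 : p.2 ≠ q.2 := fun h => hpq (Prod.ext h1 h)
      calc coh X₁ p.1 q.1 * coh X₂ p.2 q.2 ≤ 1 * mutualCoherence X₂ :=
            mul_le_mul (coh_le_one X₁ (hc₁ _) (hc₁ _)) (coh_le_mu X₂ h2)
              (coh_nonneg _ _ _) zero_le_one
        _ = mutualCoherence X₂ := one_mul _
        _ ≤ _ := le_max_right _ _
    · calc coh X₁ p.1 q.1 * coh X₂ p.2 q.2 ≤ mutualCoherence X₁ * 1 :=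
            mul_le_mul (coh_le_mu X₁ h1) (coh_le_one X₂ (hc₂ _) (hc₂ _))
              (coh_nonneg _ _ _) h01
        _ = mutualCoherence X₁ := mul_one _
        _ ≤ _ := le_max_left _ _
  · refine max_le ?_ ?_
    · obtain ⟨i, j, hij, hval⟩ := mu_mem X₁ ⟨a, b, hab⟩
      have key : mutualCoherence X₁ = coh W (i, c) (j, c) := by
        rw [hW, coh_kron, coh_self X₂ (hc₂ c), mul_one, hval]
      rw [key]
      exact coh_le_mu W (fun h => hij (congrArg Prod.fst h))
    · obtain ⟨i, j, hij, hval⟩ := mu_mem X₂ ⟨c, d, hcd⟩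
      have key : mutualCoherence X₂ = coh W (a, i) (a, j) := by
        rw [hW, coh_kron, coh_self X₁ (hc₁ a), one_mul, hval]
      rw [key]
      exact coh_le_mu W (fun h => hij (congrArg Prod.snd h))
end
end

section
/- Let F_q be a finite field with q elements and let r be an integer with 1 ≤ r < q. For any two distinct polynomials P and Q over F_q of degree at most r, the inner product of the corresponding columns of the DeVore matrix equals the number of x ∈ F_q with P(x) = Q(x), which is at most r. Consequently, the mutual coherence of the DeVore matrix satisfies μ(D) ≤ r/q. -/
open scoped BigOperators

noncomputable section

/-- The DeVore matrix: rows indexed by pairs `(x, y) ∈ F × F`, columns indexed by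
polynomials over `F` of degree at most `r`, with entry `1` if `P x = y` and `0` otherwise. -/
def deVore (F : Type*) [Field F] [DecidableEq F] (r : ℕ) :
    Matrix (F × F) {P : Polynomial F // P.degree ≤ (r : WithBot ℕ)} ℂ :=
  Matrix.of fun xy P => if P.1.eval xy.1 = xy.2 then 1 else 0

instance deVoreColFinite (F : Type*) [Field F] [Finite F] (r : ℕ) :
    Finite {P : Polynomial F // P.degree ≤ (r : WithBot ℕ)} := by
  have : Finite (Fin (r + 1) → F) := inferInstance
  refine Finite.of_injective
    (fun P : {P : Polynomial F // P.degree ≤ (r : WithBot ℕ)} =>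
      fun i : Fin (r + 1) => P.1.coeff i) ?_
  rintro ⟨P, hP⟩ ⟨Q, hQ⟩ h
  ext1
  ext n
  by_cases hn : n ≤ r
  · have := congrFun h ⟨n, Nat.lt_succ_of_le hn⟩
    simpa using this
  · push_neg at hn
    rw [Polynomial.coeff_eq_zero_of_degree_lt (lt_of_le_of_lt hP (by exact_mod_cast hn)),
      Polynomial.coeff_eq_zero_of_degree_lt (lt_of_le_of_lt hQ (by exact_mod_cast hn))]

noncomputable instance deVoreColFintype (F : Type*) [Field F] [Fintype F] (r : ℕ) :
    Fintype {P : Polynomial F // P.degree ≤ (r : WithBot ℕ)} :=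
  Fintype.ofFinite _
lemma deVore_col_norm (F : Type*) [Field F] [Fintype F] [DecidableEq F] (r : ℕ)
    (P : {P : Polynomial F // P.degree ≤ (r : WithBot ℕ)}) :
    vNorm (fun xy => deVore F r xy P) = Real.sqrt (Fintype.card F) := by
  unfold vNorm deVore
  congr 1
  rw [Fintype.sum_prod_type]
  have h1 : ∀ x : F, ∑ y : F, ‖(if P.1.eval x = y then (1:ℂ) else 0)‖ ^ 2 = 1 := by
    intro x
    simp [apply_ite (fun z : ℂ => ‖z‖), apply_ite (fun t : ℝ => t ^ 2), Finset.sum_ite_eq]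
  simp only [Matrix.of_apply]
  simp [h1]

lemma deVore_col_herm (F : Type*) [Field F] [Fintype F] [DecidableEq F] (r : ℕ)
    (P Q : {P : Polynomial F // P.degree ≤ (r : WithBot ℕ)}) :
    vHerm (fun xy => deVore F r xy P) (fun xy => deVore F r xy Q)
      = ((Finset.univ.filter (fun x : F => P.1.eval x = Q.1.eval x)).card : ℂ) := by
  unfold vHerm deVore
  rw [Fintype.sum_prod_type]
  simp only [Matrix.of_apply]
  have h1 : ∀ x : F, ∑ y : F, star (if P.1.eval x = y then (1:ℂ) else 0) * (if Q.1.eval x = y then 1 else 0)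
      = if P.1.eval x = Q.1.eval x then 1 else 0 := by
    intro x
    simp [apply_ite (star : ℂ → ℂ), ite_mul, Finset.sum_ite_eq]
  rw [Finset.sum_congr rfl (fun x _ => h1 x), Finset.sum_boole]

lemma deVore_agree_card_le (F : Type*) [Field F] [Fintype F] [DecidableEq F] (r : ℕ)
    (P Q : {P : Polynomial F // P.degree ≤ (r : WithBot ℕ)}) (hPQ : P ≠ Q) :
    (Finset.univ.filter (fun x : F => P.1.eval x = Q.1.eval x)).card ≤ r := by
  have hne : P.1 - Q.1 ≠ 0 := sub_ne_zero.mpr (fun h => hPQ (Subtype.ext h))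
  have hdeg : (P.1 - Q.1).natDegree ≤ r :=
    Polynomial.natDegree_le_iff_degree_le.mpr
      (le_trans (Polynomial.degree_sub_le _ _) (max_le P.2 Q.2))
  calc (Finset.univ.filter (fun x : F => P.1.eval x = Q.1.eval x)).card
      ≤ (P.1 - Q.1).roots.toFinset.card := by
        apply Finset.card_le_card
        intro x hx
        simp only [Finset.mem_filter] at hx
        simp [Polynomial.mem_roots, hne, Polynomial.IsRoot, sub_eq_zero, hx.2]
    _ ≤ Multiset.card (P.1 - Q.1).roots := Multiset.toFinset_card_le _
    _ ≤ (P.1 - Q.1).natDegree := Polynomial.card_roots' _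
    _ ≤ r := hdeg

/-- For distinct polynomials `P ≠ Q` of degree at most `r`, the inner product of the
corresponding DeVore columns equals the number of `x` with `P x = Q x`, which is at
most `r`; consequently `μ(D) ≤ r / q`. -/
theorem deVore_coherence_le (F : Type*) [Field F] [Fintype F] [DecidableEq F]
    (q r : ℕ) (hq : Fintype.card F = q) (hr1 : 1 ≤ r) (hrq : r < q) :
    (∀ P Q : {P : Polynomial F // P.degree ≤ (r : WithBot ℕ)}, P ≠ Q →
      vHerm (fun xy => deVore F r xy P) (fun xy => deVore F r xy Q)
          = (Nat.card {x : F // P.1.eval x = Q.1.eval x} : ℂ) ∧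
      Nat.card {x : F // P.1.eval x = Q.1.eval x} ≤ r) ∧
    mutualCoherence (deVore F r) ≤ (r : ℝ) / q := by
  have hq0 : 0 < q := lt_of_le_of_lt (Nat.zero_le r) hrq
  have hcard : ∀ P Q : {P : Polynomial F // P.degree ≤ (r : WithBot ℕ)},
      Nat.card {x : F // P.1.eval x = Q.1.eval x}
        = (Finset.univ.filter (fun x : F => P.1.eval x = Q.1.eval x)).card := by
    intro P Q
    rw [Nat.card_eq_fintype_card, Fintype.card_subtype]
  constructor
  · intro P Q hPQ
    refine ⟨?_, ?_⟩
    · rw [deVore_col_herm, hcard]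
    · rw [hcard]; exact deVore_agree_card_le F r P Q hPQ
  · apply Real.sSup_le
    · rintro x ⟨i, j, hij, rfl⟩
      rw [deVore_col_herm, deVore_col_norm, deVore_col_norm, hq,
        Real.mul_self_sqrt (Nat.cast_nonneg q), Complex.norm_natCast]
      have h := deVore_agree_card_le F r i j hij
      have hq0' : (0:ℝ) < q := by exact_mod_cast hq0
      gcongr

    · positivity

end
end

section
/- Let F_q be a finite field with q elements and let r be an integer with 1 ≤ r < q. Then the mutual coherence of the DeVore matrix D equals exactly r/q. -/
open scoped BigOperators

noncomputable section

section DeVoreAux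

variable {F : Type*} [Field F] [Fintype F] [DecidableEq F] {r : ℕ}

lemma herm_calc (P Q : Polynomial F) :
    vHerm (fun k : F × F => if P.eval k.1 = k.2 then (1:ℂ) else 0)
        (fun k : F × F => if Q.eval k.1 = k.2 then (1:ℂ) else 0)
      = ((Finset.univ.filter fun x : F => P.eval x = Q.eval x).card : ℂ) := by
  unfold vHerm
  rw [Fintype.sum_prod_type]
  have : ∀ x : F, (∑ y : F, star (if P.eval x = y then (1:ℂ) else 0) *
      (if Q.eval x = y then (1:ℂ) else 0)) = if P.eval x = Q.eval x then 1 else 0 := by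
    intro x
    simp only [apply_ite (star : ℂ → ℂ), star_one, star_zero, ite_mul, one_mul, zero_mul]
    rw [Finset.sum_ite_eq Finset.univ (P.eval x) (fun y => if Q.eval x = y then (1:ℂ) else 0)]
    simp [eq_comm]
  simp only [this]
  rw [Finset.sum_boole]

lemma norm_calc (P : Polynomial F) :
    vNorm (fun k : F × F => if P.eval k.1 = k.2 then (1:ℂ) else 0)
      = Real.sqrt (Fintype.card F) := by
  unfold vNorm
  congr 1
  rw [Fintype.sum_prod_type]
  have : ∀ x : F, (∑ y : F, ‖if P.eval x = y then (1:ℂ) else 0‖ ^ 2) = 1 := by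
    intro x
    simp only [apply_ite (fun z : ℂ => ‖z‖ ^ 2), norm_one, norm_zero, one_pow]
    simp [Finset.sum_ite_eq' Finset.univ (P.eval x)]
  simp only [this]
  simp

lemma count_le (p : Polynomial F) (hp : p ≠ 0) :
    (Finset.univ.filter fun x : F => p.eval x = 0).card ≤ p.natDegree := by
  apply Polynomial.card_le_degree_of_subset_roots
  intro x hx
  simp only [Finset.mem_val, Finset.mem_filter] at hx
  rw [Polynomial.mem_roots hp]
  exact hx.2

lemma exists_witness (hr : r ≤ Fintype.card F) :
    ∃ p : Polynomial F, p.degree ≤ (r : WithBot ℕ) ∧ p ≠ 0 ∧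
      (Finset.univ.filter fun x : F => p.eval x = 0).card = r := by
  obtain ⟨S, -, hS⟩ := Finset.exists_subset_card_eq (s := (Finset.univ : Finset F)) (n := r) (by simpa using hr)
  refine ⟨∏ a ∈ S, (Polynomial.X - Polynomial.C a), ?_, ?_, ?_⟩
  · rw [Polynomial.degree_prod]
    simp [Polynomial.degree_X_sub_C, hS]
  · exact (Polynomial.monic_prod_of_monic _ _ fun a _ => Polynomial.monic_X_sub_C a).ne_zero
  · rw [← hS]
    congr 1
    ext x
    simp [Polynomial.eval_prod, Finset.prod_eq_zero_iff, sub_eq_zero, eq_comm]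

lemma deVore_col (P : {P : Polynomial F // P.degree ≤ (r : WithBot ℕ)}) :
    (fun k => deVore F r k P) = fun k : F × F => if P.1.eval k.1 = k.2 then (1:ℂ) else 0 := rfl

end DeVoreAux

/-- For a finite field `F_q` and `1 ≤ r < q`, the mutual coherence of the DeVore matrix
equals exactly `r / q`. -/
theorem deVore_coherence_eq (F : Type*) [Field F] [Fintype F] [DecidableEq F]
    (q r : ℕ) (hq : Fintype.card F = q) (hr1 : 1 ≤ r) (hrq : r < q) :
    mutualCoherence (deVore F r) = (r : ℝ) / q := by
  have hq0 : 0 < q := Nat.lt_of_le_of_lt (Nat.zero_le r) hrq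
  have hqR : (0:ℝ) < q := by exact_mod_cast hq0
  have hsq : Real.sqrt q * Real.sqrt q = q := Real.mul_self_sqrt hqR.le
  apply IsGreatest.csSup_eq
  constructor
  · obtain ⟨p, hpd, hp0, hpc⟩ := exists_witness (F := F) (r := r) (hq ▸ hrq.le)
    refine ⟨⟨p, hpd⟩, ⟨0, by simp⟩, fun h => hp0 (congrArg Subtype.val h), ?_⟩
    rw [deVore_col, deVore_col, herm_calc, norm_calc, norm_calc, hq, hsq]
    have : (Finset.univ.filter fun x : F => p.eval x = (0 : Polynomial F).eval x).card = r := by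
      simpa using hpc
    rw [this, Complex.norm_natCast]
  · rintro x ⟨i, j, hij, rfl⟩
    rw [deVore_col, deVore_col, herm_calc, norm_calc, norm_calc, hq, hsq,
      Complex.norm_natCast]
    have hNr : (Finset.univ.filter fun x : F => i.1.eval x = j.1.eval x).card ≤ r := by
      have hD : i.1 - j.1 ≠ 0 := sub_ne_zero.2 (fun h => hij (Subtype.ext h))
      have := count_le (i.1 - j.1) hD
      have hfilt : (Finset.univ.filter fun x : F => i.1.eval x = j.1.eval x)
          = Finset.univ.filter fun x : F => (i.1 - j.1).eval x = 0 := by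
        apply Finset.filter_congr
        intro x _
        simp [sub_eq_zero]
      rw [hfilt]
      exact this.trans (Polynomial.natDegree_le_iff_degree_le.2
        (le_trans (Polynomial.degree_sub_le _ _) (max_le i.2 j.2)))
    gcongr


end
end

section
/- Let F_q be a finite field with q elements, let r be an integer with 1 ≤ r < q, and let D̃ = (1/√q)·D be the column-normalized DeVore matrix. Then for every integer L ≥ 1 and every vector u ∈ ℂ^{q^{r+1}} with at most L nonzero entries, (1 − (L−1)r/q) ‖u‖₂² ≤ ‖D̃u‖₂² ≤ (1 + (L−1)r/q) ‖u‖₂²; i.e., D̃ satisfies the restricted isometry property of order L with constant δ_L = (L−1)r/q, and δ_L < 1 whenever L < q/r + 1. -/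
open scoped BigOperators

noncomputable section

section Aux

variable {F : Type*} [Field F] [Fintype F] [DecidableEq F] {r : ℕ}

/-- number of points where two columns agree -/
def Ncnt (P Q : {P : Polynomial F // P.degree ≤ (r : WithBot ℕ)}) : ℕ :=
  (Finset.univ.filter fun x : F => P.1.eval x = Q.1.eval x).card

lemma Ncnt_diag (P : {P : Polynomial F // P.degree ≤ (r : WithBot ℕ)}) :
    Ncnt P P = Fintype.card F := by
  simp [Ncnt]

lemma Ncnt_le {P Q : {P : Polynomial F // P.degree ≤ (r : WithBot ℕ)}} (h : P ≠ Q) :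
    Ncnt P Q ≤ r := by
  have hne : P.1 - Q.1 ≠ 0 := sub_ne_zero.mpr (fun hh => h (Subtype.ext hh))
  have hsub : (Finset.univ.filter fun x : F => P.1.eval x = Q.1.eval x)
      ⊆ (P.1 - Q.1).roots.toFinset := by
    intro x hx
    simp only [Finset.mem_filter] at hx
    rw [Multiset.mem_toFinset, Polynomial.mem_roots']
    exact ⟨hne, by simp [Polynomial.IsRoot, hx.2]⟩
  calc Ncnt P Q ≤ (P.1 - Q.1).roots.toFinset.card := Finset.card_le_card hsub
    _ ≤ Multiset.card (P.1 - Q.1).roots := Multiset.toFinset_card_le _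
    _ ≤ (P.1 - Q.1).natDegree := Polynomial.card_roots' _
    _ ≤ r := Polynomial.natDegree_le_iff_degree_le.mpr
        (le_trans (Polynomial.degree_sub_le _ _) (max_le P.2 Q.2))

lemma deVore_colsum (P Q : {P : Polynomial F // P.degree ≤ (r : WithBot ℕ)}) :
    ∑ xy : F × F, deVore F r xy P * deVore F r xy Q = (Ncnt P Q : ℂ) := by
  rw [Fintype.sum_prod_type]
  have h1 : ∀ x : F, ∑ y : F, deVore F r (x, y) P * deVore F r (x, y) Q
      = if P.1.eval x = Q.1.eval x then (1 : ℂ) else 0 := by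
    intro x
    simp only [deVore, Matrix.of_apply, ite_mul, one_mul, zero_mul]
    rw [Finset.sum_ite_eq Finset.univ (P.1.eval x) (fun y => if Q.1.eval x = y then (1:ℂ) else 0)]
    simp [eq_comm]
  simp only [h1]
  rw [Finset.sum_boole]
  rfl

lemma deVore_key (u : {P : Polynomial F // P.degree ≤ (r : WithBot ℕ)} → ℂ) :
    ∑ xy : F × F, ‖(deVore F r).mulVec u xy‖ ^ 2
      = (∑ P, ∑ Q, (starRingEnd ℂ) (u P) * u Q * (Ncnt P Q : ℂ)).re := by
  have hnorm : ∀ z : ℂ, ‖z‖ ^ 2 = ((starRingEnd ℂ) z * z).re := by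
    intro z
    rw [mul_comm, Complex.mul_conj, Complex.ofReal_re, Complex.normSq_eq_norm_sq]
  simp only [hnorm, ← Complex.re_sum]
  congr 1
  have hconjA : ∀ (xy : F × F) P, (starRingEnd ℂ) (deVore F r xy P) = deVore F r xy P := by
    intro xy P
    simp only [deVore, Matrix.of_apply, apply_ite, map_one, map_zero]
    split <;> simp
  have hw : ∀ xy, (deVore F r).mulVec u xy = ∑ P, deVore F r xy P * u P := by
    intro xy
    simp [Matrix.mulVec, dotProduct]
  calc ∑ xy : F × F, (starRingEnd ℂ) ((deVore F r).mulVec u xy) * (deVore F r).mulVec u xy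
      = ∑ xy : F × F, ∑ P, ∑ Q,
          (deVore F r xy P * (starRingEnd ℂ) (u P)) * (deVore F r xy Q * u Q) := by
        refine Finset.sum_congr rfl fun xy _ => ?_
        rw [hw, map_sum, Finset.sum_mul_sum]
        refine Finset.sum_congr rfl fun P _ => Finset.sum_congr rfl fun Q _ => ?_
        rw [map_mul, hconjA]
    _ = ∑ P, ∑ Q, ∑ xy : F × F,
          (deVore F r xy P * (starRingEnd ℂ) (u P)) * (deVore F r xy Q * u Q) := by
        rw [Finset.sum_comm]
        exact Finset.sum_congr rfl fun P _ => Finset.sum_comm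
    _ = ∑ P, ∑ Q, (starRingEnd ℂ) (u P) * u Q * (Ncnt P Q : ℂ) := by
        refine Finset.sum_congr rfl fun P _ => Finset.sum_congr rfl fun Q _ => ?_
        rw [← deVore_colsum P Q, Finset.mul_sum]
        exact Finset.sum_congr rfl fun xy _ => by ring

end Aux

/-- The column-normalized DeVore matrix `D̃ = (1/√q) D` satisfies the RIP of order `L`
with constant `δ_L = (L−1) r / q`, and `δ_L < 1` whenever `L < q/r + 1`. -/
theorem deVore_rip (F : Type*) [Field F] [Fintype F] [DecidableEq F]
    (q r : ℕ) (hq : Fintype.card F = q) (hr1 : 1 ≤ r) (hrq : r < q)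
    (L : ℕ) (hL : 1 ≤ L) :
    (∀ u : {P : Polynomial F // P.degree ≤ (r : WithBot ℕ)} → ℂ,
      (Function.support u).ncard ≤ L →
      (1 - ((L : ℝ) - 1) * r / q) * vNorm u ^ 2 ≤
          vNorm (Matrix.mulVec ((((Real.sqrt q : ℝ) : ℂ))⁻¹ • deVore F r) u) ^ 2 ∧
      vNorm (Matrix.mulVec ((((Real.sqrt q : ℝ) : ℂ))⁻¹ • deVore F r) u) ^ 2 ≤
          (1 + ((L : ℝ) - 1) * r / q) * vNorm u ^ 2) ∧
    ((L : ℝ) < (q : ℝ) / r + 1 → ((L : ℝ) - 1) * r / q < 1) := by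
  classical
  have hq0 : 0 < q := lt_of_le_of_lt (Nat.zero_le r) hrq
  have hqR : (0 : ℝ) < q := by exact_mod_cast hq0
  have hrR : (0 : ℝ) < r := by exact_mod_cast hr1
  constructor
  · intro u hsupp
    set B : ℝ := ((L : ℝ) - 1) * r with hB
    set a : {P : Polynomial F // P.degree ≤ (r : WithBot ℕ)} → ℝ := fun P => ‖u P‖ with ha
    set S2 : ℝ := ∑ P, a P ^ 2 with hS2
    have hS2nonneg : 0 ≤ S2 := Finset.sum_nonneg fun _ _ => sq_nonneg _
    have hvu : vNorm u ^ 2 = S2 := Real.sq_sqrt hS2nonneg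
    -- the support finset
    set s : Finset {P : Polynomial F // P.degree ≤ (r : WithBot ℕ)} :=
      Finset.univ.filter (fun P => u P ≠ 0) with hs
    have hcard : (s.card : ℝ) ≤ L := by
      have h1 : (s : Set {P : Polynomial F // P.degree ≤ (r : WithBot ℕ)})
          = Function.support u := by
        ext P; simp [hs, Function.support]
      have : s.card ≤ L := by
        rw [← Set.ncard_coe_finset, h1]; exact hsupp
      exact_mod_cast this
    have ha0 : ∀ P, P ∉ s → a P = 0 := by
      intro P hP
      simp only [hs, Finset.mem_filter, Finset.mem_univ, true_and, not_not] at hP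
      simp [ha, hP]
    -- off-diagonal complex sum
    set T : ℂ := ∑ P, ∑ Q ∈ Finset.univ.erase P,
      (starRingEnd ℂ) (u P) * u Q * (Ncnt P Q : ℂ) with hT
    -- splitting the key identity
    have hsplit : (∑ P, ∑ Q, (starRingEnd ℂ) (u P) * u Q * (Ncnt P Q : ℂ)).re
        = (q : ℝ) * S2 + T.re := by
      have h1 : ∀ P : {P : Polynomial F // P.degree ≤ (r : WithBot ℕ)},
          ∑ Q, (starRingEnd ℂ) (u P) * u Q * (Ncnt P Q : ℂ)
            = (starRingEnd ℂ) (u P) * u P * (Ncnt P P : ℂ)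
              + ∑ Q ∈ Finset.univ.erase P, (starRingEnd ℂ) (u P) * u Q * (Ncnt P Q : ℂ) :=
        fun P => (Finset.add_sum_erase Finset.univ _ (Finset.mem_univ P)).symm
      simp only [h1, Finset.sum_add_distrib]
      rw [Complex.add_re, Complex.re_sum]
      congr 1
      have : ∀ P : {P : Polynomial F // P.degree ≤ (r : WithBot ℕ)},
          ((starRingEnd ℂ) (u P) * u P * (Ncnt P P : ℂ)).re = (q : ℝ) * a P ^ 2 := by
        intro P
        rw [Ncnt_diag, hq, mul_comm ((starRingEnd ℂ) (u P)) (u P), Complex.mul_conj]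
        rw [show ((q : ℕ) : ℂ) = (((q : ℕ) : ℝ) : ℂ) by push_cast; ring,
          ← Complex.ofReal_mul, Complex.ofReal_re, Complex.normSq_eq_norm_sq]
        simp [ha, mul_comm]
      simp only [this, ← Finset.mul_sum]
      rw [hS2]
    -- bound the off-diagonal sum
    have hM : ∑ P, ∑ Q ∈ Finset.univ.erase P, a P * a Q ≤ ((L : ℝ) - 1) * S2 := by
      have hrestrict : ∑ P, ∑ Q ∈ Finset.univ.erase P, a P * a Q
          = ∑ P ∈ s, ∑ Q ∈ s.erase P, a P * a Q := by
        rw [← Finset.sum_subset s.subset_univ (by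
          intro P _ hP
          simp [ha0 P hP])]
        refine Finset.sum_congr rfl fun P hP => ?_
        rw [← Finset.sum_subset (Finset.erase_subset_erase P s.subset_univ) (by
          intro Q hQ hQ'
          have hQP : Q ≠ P := (Finset.mem_erase.mp hQ).1
          have : Q ∉ s := fun hQs => hQ' (Finset.mem_erase.mpr ⟨hQP, hQs⟩)
          simp [ha0 Q this])]
      rw [hrestrict]
      have hinner : ∀ P ∈ s, ∑ Q ∈ s.erase P, a P * a Q
          = a P * ((∑ Q ∈ s, a Q) - a P) := by
        intro P hP
        rw [← Finset.mul_sum, Finset.sum_erase_eq_sub hP]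
      rw [Finset.sum_congr rfl hinner]
      have hexp : ∑ P ∈ s, a P * ((∑ Q ∈ s, a Q) - a P)
          = (∑ P ∈ s, a P) ^ 2 - ∑ P ∈ s, a P ^ 2 := by
        rw [Finset.sum_congr rfl (fun P _ => by ring : ∀ P ∈ s,
          a P * ((∑ Q ∈ s, a Q) - a P) = a P * (∑ Q ∈ s, a Q) - a P ^ 2)]
        rw [Finset.sum_sub_distrib, ← Finset.sum_mul, sq]
      rw [hexp]
      have hCS : (∑ P ∈ s, a P) ^ 2 ≤ (s.card : ℝ) * ∑ P ∈ s, a P ^ 2 := by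
        exact sq_sum_le_card_mul_sum_sq
      have hS2s : ∑ P ∈ s, a P ^ 2 = S2 := by
        rw [hS2]
        exact Finset.sum_subset s.subset_univ (fun P _ hP => by simp [ha0 P hP])
      have hnn : 0 ≤ ∑ P ∈ s, a P ^ 2 := Finset.sum_nonneg fun _ _ => sq_nonneg _
      calc (∑ P ∈ s, a P) ^ 2 - ∑ P ∈ s, a P ^ 2
          ≤ (s.card : ℝ) * (∑ P ∈ s, a P ^ 2) - ∑ P ∈ s, a P ^ 2 := by linarith
        _ = ((s.card : ℝ) - 1) * (∑ P ∈ s, a P ^ 2) := by ring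
        _ ≤ ((L : ℝ) - 1) * (∑ P ∈ s, a P ^ 2) :=
            mul_le_mul_of_nonneg_right (by linarith) hnn
        _ = ((L : ℝ) - 1) * S2 := by rw [hS2s]
    have hTbound : |T.re| ≤ B * S2 := by
      have h1 : |T.re| ≤ ‖T‖ := Complex.abs_re_le_norm T
      have h2 : ‖T‖ ≤ ∑ P, ∑ Q ∈ Finset.univ.erase P, a P * a Q * r := by
        refine (norm_sum_le _ _).trans (Finset.sum_le_sum fun P _ => ?_)
        refine (norm_sum_le _ _).trans (Finset.sum_le_sum fun Q hQ => ?_)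
        have hQP : Q ≠ P := (Finset.mem_erase.mp hQ).1
        have hN : (Ncnt P Q : ℝ) ≤ r := by exact_mod_cast Ncnt_le (Ne.symm hQP)
        have : ‖(starRingEnd ℂ) (u P) * u Q * (Ncnt P Q : ℂ)‖
            = a P * a Q * (Ncnt P Q : ℝ) := by
          rw [norm_mul, norm_mul, RCLike.norm_conj]
          simp [ha]
        rw [this]
        exact mul_le_mul_of_nonneg_left hN (by positivity)
      have h3 : ∑ P, ∑ Q ∈ Finset.univ.erase P, a P * a Q * r
          = (∑ P, ∑ Q ∈ Finset.univ.erase P, a P * a Q) * r := by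
        rw [Finset.sum_mul]
        exact Finset.sum_congr rfl fun P _ => by rw [Finset.sum_mul]
      have h4 : (∑ P, ∑ Q ∈ Finset.univ.erase P, a P * a Q) * (r : ℝ)
          ≤ (((L : ℝ) - 1) * S2) * r := mul_le_mul_of_nonneg_right hM hrR.le
      calc |T.re| ≤ ‖T‖ := h1
        _ ≤ ∑ P, ∑ Q ∈ Finset.univ.erase P, a P * a Q * r := h2
        _ = (∑ P, ∑ Q ∈ Finset.univ.erase P, a P * a Q) * r := h3
        _ ≤ (((L : ℝ) - 1) * S2) * r := h4
        _ = B * S2 := by rw [hB]; ring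
    -- norm of the scaled matrix-vector product
    have hE : vNorm (Matrix.mulVec ((((Real.sqrt q : ℝ) : ℂ))⁻¹ • deVore F r) u) ^ 2
        = S2 + T.re / q := by
      have hnn : 0 ≤ ∑ xy : F × F,
          ‖Matrix.mulVec ((((Real.sqrt q : ℝ) : ℂ))⁻¹ • deVore F r) u xy‖ ^ 2 :=
        Finset.sum_nonneg fun _ _ => sq_nonneg _
      rw [vNorm, Real.sq_sqrt hnn]
      have hc : ‖(((Real.sqrt q : ℝ)) : ℂ)⁻¹‖ ^ 2 = (q : ℝ)⁻¹ := by
        rw [norm_inv, Complex.norm_real, Real.norm_eq_abs,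
          abs_of_nonneg (Real.sqrt_nonneg _), inv_pow, Real.sq_sqrt hqR.le]
      have hterm : ∀ xy : F × F,
          ‖Matrix.mulVec ((((Real.sqrt q : ℝ) : ℂ))⁻¹ • deVore F r) u xy‖ ^ 2
            = (q : ℝ)⁻¹ * ‖(deVore F r).mulVec u xy‖ ^ 2 := by
        intro xy
        rw [Matrix.smul_mulVec, Pi.smul_apply, smul_eq_mul, norm_mul, mul_pow, hc]
      rw [Finset.sum_congr rfl fun xy _ => hterm xy, ← Finset.mul_sum, deVore_key, hsplit]
      field_simp
    rw [hE, hvu]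
    have habs := abs_le.mp hTbound
    constructor
    · have heq : S2 + T.re / q - (1 - B / q) * S2 = (T.re + B * S2) / q := by ring
      have hnn : 0 ≤ (T.re + B * S2) / q := div_nonneg (by linarith [habs.1]) hqR.le
      linarith
    · have heq : (1 + B / q) * S2 - (S2 + T.re / q) = (B * S2 - T.re) / q := by ring
      have hnn : 0 ≤ (B * S2 - T.re) / q := div_nonneg (by linarith [habs.2]) hqR.le
      linarith
  · intro h
    rw [div_lt_one hqR]
    have : (L : ℝ) - 1 < (q : ℝ) / r := by linarith
    exact (lt_div_iff₀ hrR).mp this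

end
end

section
/- Let F_{q₁} and F_{q₂} be finite fields with q₁ and q₂ elements, and let r₁, r₂ be integers with 1 ≤ r₁ < q₁ and 1 ≤ r₂ < q₂. Let U_b and V_b be the corresponding DeVore matrices of sizes q₁² × q₁^{r₁+1} and q₂² × q₂^{r₂+1}. Then the mutual coherence of the Kronecker product S_b = U_b ⊗ V_b equals max{r₁/q₁, r₂/q₂}. -/
open scoped BigOperators

noncomputable section

/-- Number of points where two polynomials agree. -/
def cnt (F : Type*) [Field F] [Fintype F] [DecidableEq F] (P Q : Polynomial F) : ℕ :=
  (Finset.univ.filter fun x => P.eval x = Q.eval x).card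

section cntLemmas
open Polynomial
variable {F : Type*} [Field F] [Fintype F] [DecidableEq F]

lemma cnt_self (P : Polynomial F) : cnt F P P = Fintype.card F := by
  simp [cnt]

lemma cnt_le_card (P Q : Polynomial F) : cnt F P Q ≤ Fintype.card F :=
  (Finset.card_filter_le _ _).trans (le_of_eq Finset.card_univ)

lemma cnt_le {r : ℕ} {P Q : Polynomial F} (hP : P.degree ≤ (r : WithBot ℕ))
    (hQ : Q.degree ≤ (r : WithBot ℕ)) (hne : P ≠ Q) : cnt F P Q ≤ r := by
  have hsub : P - Q ≠ 0 := sub_ne_zero.2 hne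
  have hdeg : (P - Q).natDegree ≤ r :=
    Polynomial.natDegree_le_iff_degree_le.2 ((Polynomial.degree_sub_le _ _).trans (max_le hP hQ))
  have hss : (Finset.univ.filter fun x => P.eval x = Q.eval x) ⊆ (P - Q).roots.toFinset := by
    intro x hx
    simp only [Finset.mem_filter] at hx
    simp [Multiset.mem_toFinset, Polynomial.mem_roots hsub, Polynomial.IsRoot, sub_eq_zero, hx.2]
  calc cnt F P Q ≤ (P - Q).roots.toFinset.card := Finset.card_le_card hss
    _ ≤ Multiset.card (P - Q).roots := Multiset.toFinset_card_le _
    _ ≤ (P - Q).natDegree := Polynomial.card_roots' _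
    _ ≤ r := hdeg

lemma cnt_attain {r : ℕ} (hr : r ≤ Fintype.card F) :
    ∃ P : Polynomial F, P ≠ 0 ∧ P.degree ≤ (r : WithBot ℕ) ∧ cnt F P 0 = r := by
  obtain ⟨s, hs⟩ := Finset.exists_subset_card_eq (le_of_le_of_eq hr Finset.card_univ.symm)
  refine ⟨∏ a ∈ s, (X - C a), ?_, ?_, ?_⟩
  · exact (monic_prod_of_monic _ _ fun a _ => monic_X_sub_C a).ne_zero
  · refine Polynomial.natDegree_le_iff_degree_le.1 ?_
    rw [Polynomial.natDegree_prod _ _ (fun a _ => X_sub_C_ne_zero a)]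
    simp [hs.2]
  · have h2 : (Finset.univ.filter fun x => (∏ a ∈ s, (X - C a)).eval x = Polynomial.eval x 0) = s := by
      ext x
      simp [Polynomial.eval_prod, Finset.prod_eq_zero_iff, sub_eq_zero, eq_comm]
    rw [cnt, h2, hs.2]

lemma deVore_inner (r : ℕ) (P Q : {P : Polynomial F // P.degree ≤ (r : WithBot ℕ)}) :
    ∑ k : F × F, star (deVore F r k P) * deVore F r k Q = (cnt F P.1 Q.1 : ℂ) := by
  rw [Fintype.sum_prod_type]
  have : ∀ x : F, ∑ y : F, star (deVore F r (x, y) P) * deVore F r (x, y) Q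
      = if P.1.eval x = Q.1.eval x then 1 else 0 := by
    intro x
    simp only [deVore, Matrix.of_apply, apply_ite (star : ℂ → ℂ), star_one, star_zero,
      ite_mul, one_mul, zero_mul]
    rw [Finset.sum_ite_eq Finset.univ (P.1.eval x) fun y => if Q.1.eval x = y then (1:ℂ) else 0]
    simp [eq_comm]
  simp_rw [this, cnt]
  rw [Finset.sum_ite, Finset.sum_const, Finset.sum_const]
  simp

lemma deVore_normsq (r : ℕ) (P : {P : Polynomial F // P.degree ≤ (r : WithBot ℕ)}) :
    ∑ k : F × F, ‖deVore F r k P‖ ^ 2 = (Fintype.card F : ℝ) := by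
  rw [Fintype.sum_prod_type]
  have : ∀ x y : F, ‖deVore F r (x, y) P‖ ^ 2 = if P.1.eval x = y then (1:ℝ) else 0 := by
    intro x y
    simp only [deVore, Matrix.of_apply, apply_ite (‖·‖ : ℂ → ℝ)]
    split <;> simp
  simp_rw [this]
  simp

end cntLemmas

/-- The mutual coherence of the Kronecker product `S_b = U_b ⊗ V_b` of two DeVore
matrices equals `max {r₁/q₁, r₂/q₂}`. -/
theorem deVore_kron_coherence (F₁ F₂ : Type*) [Field F₁] [Fintype F₁] [DecidableEq F₁]
    [Field F₂] [Fintype F₂] [DecidableEq F₂]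
    (q₁ q₂ r₁ r₂ : ℕ) (hq₁ : Fintype.card F₁ = q₁) (hq₂ : Fintype.card F₂ = q₂)
    (hr₁ : 1 ≤ r₁) (hrq₁ : r₁ < q₁) (hr₂ : 1 ≤ r₂) (hrq₂ : r₂ < q₂) :
    mutualCoherence (Matrix.kroneckerMap (· * ·) (deVore F₁ r₁) (deVore F₂ r₂)) =
      max ((r₁ : ℝ) / q₁) ((r₂ : ℝ) / q₂) := by
  classical
  set Θ := Matrix.kroneckerMap (· * ·) (deVore F₁ r₁) (deVore F₂ r₂) with hΘ
  have hq₁0 : 0 < q₁ := lt_of_le_of_lt (Nat.zero_le r₁) hrq₁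
  have hq₂0 : 0 < q₂ := lt_of_le_of_lt (Nat.zero_le r₂) hrq₂
  have hq₁pos : (0:ℝ) < q₁ := by exact_mod_cast hq₁0
  have hq₂pos : (0:ℝ) < q₂ := by exact_mod_cast hq₂0
  have hq₁ne : (q₁:ℝ) ≠ 0 := hq₁pos.ne'
  have hq₂ne : (q₂:ℝ) ≠ 0 := hq₂pos.ne'
  have hherm : ∀ i j : {P : Polynomial F₁ // P.degree ≤ (r₁ : WithBot ℕ)} ×
      {P : Polynomial F₂ // P.degree ≤ (r₂ : WithBot ℕ)},
      vHerm (fun k => Θ k i) (fun k => Θ k j)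
        = (cnt F₁ i.1.1 j.1.1 : ℂ) * (cnt F₂ i.2.1 j.2.1 : ℂ) := by
    intro i j
    rw [vHerm, Fintype.sum_prod_type]
    calc ∑ k₁, ∑ k₂, star (Θ (k₁, k₂) i) * Θ (k₁, k₂) j
        = ∑ k₁, ∑ k₂, (star (deVore F₁ r₁ k₁ i.1) * deVore F₁ r₁ k₁ j.1) *
            (star (deVore F₂ r₂ k₂ i.2) * deVore F₂ r₂ k₂ j.2) := by
          refine Finset.sum_congr rfl fun k₁ _ => Finset.sum_congr rfl fun k₂ _ => ?_
          show star (deVore F₁ r₁ k₁ i.1 * deVore F₂ r₂ k₂ i.2) *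
            (deVore F₁ r₁ k₁ j.1 * deVore F₂ r₂ k₂ j.2) = _
          rw [star_mul']; ring
      _ = (∑ k₁, star (deVore F₁ r₁ k₁ i.1) * deVore F₁ r₁ k₁ j.1) *
          (∑ k₂, star (deVore F₂ r₂ k₂ i.2) * deVore F₂ r₂ k₂ j.2) :=
            (Finset.sum_mul_sum _ _ _ _).symm
      _ = _ := by rw [deVore_inner, deVore_inner]
  have hnorm : ∀ i : {P : Polynomial F₁ // P.degree ≤ (r₁ : WithBot ℕ)} ×
      {P : Polynomial F₂ // P.degree ≤ (r₂ : WithBot ℕ)},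
      vNorm (fun k => Θ k i) = Real.sqrt ((q₁ : ℝ) * q₂) := by
    intro i
    rw [vNorm, Fintype.sum_prod_type]
    congr 1
    calc ∑ k₁, ∑ k₂, ‖Θ (k₁, k₂) i‖ ^ 2
        = ∑ k₁, ∑ k₂, ‖deVore F₁ r₁ k₁ i.1‖ ^ 2 * ‖deVore F₂ r₂ k₂ i.2‖ ^ 2 := by
          refine Finset.sum_congr rfl fun k₁ _ => Finset.sum_congr rfl fun k₂ _ => ?_
          show ‖deVore F₁ r₁ k₁ i.1 * deVore F₂ r₂ k₂ i.2‖ ^ 2 = _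
          rw [norm_mul, mul_pow]
      _ = (∑ k₁, ‖deVore F₁ r₁ k₁ i.1‖ ^ 2) * (∑ k₂, ‖deVore F₂ r₂ k₂ i.2‖ ^ 2) :=
            (Finset.sum_mul_sum _ _ _ _).symm
      _ = (q₁ : ℝ) * q₂ := by rw [deVore_normsq, deVore_normsq, hq₁, hq₂]
  have hratio : ∀ i j : {P : Polynomial F₁ // P.degree ≤ (r₁ : WithBot ℕ)} ×
      {P : Polynomial F₂ // P.degree ≤ (r₂ : WithBot ℕ)},
      ‖vHerm (fun k => Θ k i) (fun k => Θ k j)‖ /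
        (vNorm (fun k => Θ k i) * vNorm (fun k => Θ k j))
        = ((cnt F₁ i.1.1 j.1.1 : ℝ) * (cnt F₂ i.2.1 j.2.1 : ℝ)) / ((q₁ : ℝ) * q₂) := by
    intro i j
    rw [hherm i j, hnorm i, hnorm j, Real.mul_self_sqrt (by positivity), norm_mul,
      Complex.norm_natCast, Complex.norm_natCast]
  have hmem₁ : ∃ i j : {P : Polynomial F₁ // P.degree ≤ (r₁ : WithBot ℕ)} ×
      {P : Polynomial F₂ // P.degree ≤ (r₂ : WithBot ℕ)}, i ≠ j ∧
      (r₁ : ℝ) / q₁ = ‖vHerm (fun k => Θ k i) (fun k => Θ k j)‖ /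
        (vNorm (fun k => Θ k i) * vNorm (fun k => Θ k j)) := by
    obtain ⟨P, hP0, hPd, hPc⟩ := cnt_attain (F := F₁) (r := r₁) (hq₁ ▸ hrq₁.le)
    refine ⟨(⟨P, hPd⟩, ⟨0, by simp⟩), (⟨0, by simp⟩, ⟨0, by simp⟩), ?_, ?_⟩
    · intro h
      exact hP0 (by simpa using congrArg (fun p => p.1.1) h)
    · rw [hratio]
      simp only [hPc, cnt_self, hq₂]
      rw [mul_div_mul_right _ _ hq₂ne]
  have hmem₂ : ∃ i j : {P : Polynomial F₁ // P.degree ≤ (r₁ : WithBot ℕ)} ×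
      {P : Polynomial F₂ // P.degree ≤ (r₂ : WithBot ℕ)}, i ≠ j ∧
      (r₂ : ℝ) / q₂ = ‖vHerm (fun k => Θ k i) (fun k => Θ k j)‖ /
        (vNorm (fun k => Θ k i) * vNorm (fun k => Θ k j)) := by
    obtain ⟨P, hP0, hPd, hPc⟩ := cnt_attain (F := F₂) (r := r₂) (hq₂ ▸ hrq₂.le)
    refine ⟨(⟨0, by simp⟩, ⟨P, hPd⟩), (⟨0, by simp⟩, ⟨0, by simp⟩), ?_, ?_⟩
    · intro h
      exact hP0 (by simpa using congrArg (fun p => p.2.1) h)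
    · rw [hratio]
      simp only [hPc, cnt_self, hq₁]
      rw [mul_div_mul_left _ _ hq₁ne]
  have hub : ∀ x ∈ {x : ℝ | ∃ i j : {P : Polynomial F₁ // P.degree ≤ (r₁ : WithBot ℕ)} ×
      {P : Polynomial F₂ // P.degree ≤ (r₂ : WithBot ℕ)}, i ≠ j ∧
      x = ‖vHerm (fun k => Θ k i) (fun k => Θ k j)‖ /
        (vNorm (fun k => Θ k i) * vNorm (fun k => Θ k j))},
      x ≤ max ((r₁ : ℝ) / q₁) ((r₂ : ℝ) / q₂) := by
    rintro x ⟨i, j, hij, rfl⟩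
    rw [hratio]
    have h1c : (cnt F₁ i.1.1 j.1.1 : ℝ) ≤ q₁ := by exact_mod_cast hq₁ ▸ cnt_le_card i.1.1 j.1.1
    have h2c : (cnt F₂ i.2.1 j.2.1 : ℝ) ≤ q₂ := by exact_mod_cast hq₂ ▸ cnt_le_card i.2.1 j.2.1
    have hcase : i.1 ≠ j.1 ∨ i.2 ≠ j.2 := by
      rcases eq_or_ne i.1 j.1 with h | h
      · exact Or.inr fun h2 => hij (Prod.ext h h2)
      · exact Or.inl h
    rcases hcase with h | h
    · have hc : (cnt F₁ i.1.1 j.1.1 : ℝ) ≤ r₁ := by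
        exact_mod_cast cnt_le i.1.2 j.1.2 fun he => h (Subtype.ext he)
      refine le_max_of_le_left ?_
      calc (cnt F₁ i.1.1 j.1.1 : ℝ) * (cnt F₂ i.2.1 j.2.1 : ℝ) / ((q₁ : ℝ) * q₂)
          ≤ (r₁ : ℝ) * q₂ / ((q₁ : ℝ) * q₂) := by
            gcongr
        _ = (r₁ : ℝ) / q₁ := mul_div_mul_right _ _ hq₂ne
    · have hc : (cnt F₂ i.2.1 j.2.1 : ℝ) ≤ r₂ := by
        exact_mod_cast cnt_le i.2.2 j.2.2 fun he => h (Subtype.ext he)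
      refine le_max_of_le_right ?_
      calc (cnt F₁ i.1.1 j.1.1 : ℝ) * (cnt F₂ i.2.1 j.2.1 : ℝ) / ((q₁ : ℝ) * q₂)
          ≤ (q₁ : ℝ) * r₂ / ((q₁ : ℝ) * q₂) := by
            gcongr
        _ = (r₂ : ℝ) / q₂ := mul_div_mul_left _ _ hq₁ne
  unfold mutualCoherence
  have hbdd : BddAbove {x : ℝ | ∃ i j : {P : Polynomial F₁ // P.degree ≤ (r₁ : WithBot ℕ)} ×
      {P : Polynomial F₂ // P.degree ≤ (r₂ : WithBot ℕ)}, i ≠ j ∧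
      x = ‖vHerm (fun k => Θ k i) (fun k => Θ k j)‖ /
        (vNorm (fun k => Θ k i) * vNorm (fun k => Θ k j))} :=
    ⟨_, fun x hx => hub x hx⟩
  exact le_antisymm (csSup_le ⟨_, hmem₁⟩ hub)
    (max_le (le_csSup hbdd hmem₁) (le_csSup hbdd hmem₂))

end
end

section
/- Let F_{q₁} and F_{q₂} be finite fields with q₁ and q₂ elements, let r₁, r₂ be integers with 1 ≤ r₁ < q₁ and 1 ≤ r₂ < q₂, let U_b and V_b be the corresponding DeVore matrices, and let S_C = (1/√(q₁q₂)) · (U_b ⊗ V_b) be the column-normalized Kronecker product. Then for every integer L ≥ 1 and every vector u with at most L nonzero entries, (1 − (L−1)μ*) ‖u‖₂² ≤ ‖S_C u‖₂² ≤ (1 + (L−1)μ*) ‖u‖₂², where μ* = max{r₁/q₁, r₂/q₂}; i.e., S_C satisfies the restricted isometry property of order L with constant δ_L = (L−1)·max{r₁/q₁, r₂/q₂}. -/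
open scoped BigOperators
set_option maxHeartbeats 1000000

noncomputable section

lemma vNorm_sq {ι : Type*} [Fintype ι] (u : ι → ℂ) :
    vNorm u ^ 2 = ∑ i, ‖u i‖ ^ 2 :=
  Real.sq_sqrt (Finset.sum_nonneg fun _ _ => sq_nonneg _)

lemma deVore_gram (F : Type*) [Field F] [Fintype F] [DecidableEq F] (r : ℕ)
    (P Q : {P : Polynomial F // P.degree ≤ (r : WithBot ℕ)}) :
    (∑ xy : F × F, deVore F r xy P * deVore F r xy Q)
      = ((Finset.univ.filter fun x : F => P.1.eval x = Q.1.eval x).card : ℂ) := by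
  have hx : ∀ x : F, (∑ y : F, deVore F r (x, y) P * deVore F r (x, y) Q)
      = if P.1.eval x = Q.1.eval x then (1:ℂ) else 0 := by
    intro x
    simp only [deVore, Matrix.of_apply, ite_mul, one_mul, zero_mul]
    rw [Finset.sum_ite_eq]
    simp [eq_comm]
  rw [Fintype.sum_prod_type]
  simp only [hx]
  rw [Finset.sum_boole]

lemma deVore_count_ne {F : Type*} [Field F] [Fintype F] [DecidableEq F] {r : ℕ}
    (P Q : {P : Polynomial F // P.degree ≤ (r : WithBot ℕ)}) (h : P ≠ Q) :
    (Finset.univ.filter fun x : F => P.1.eval x = Q.1.eval x).card ≤ r := by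
  have hne : P.1 - Q.1 ≠ 0 := sub_ne_zero.mpr fun hh => h (Subtype.ext hh)
  have hdeg : (P.1 - Q.1).natDegree ≤ r :=
    Polynomial.natDegree_le_iff_degree_le.mpr
      ((Polynomial.degree_sub_le _ _).trans (max_le P.2 Q.2))
  calc (Finset.univ.filter fun x : F => P.1.eval x = Q.1.eval x).card
      ≤ (P.1 - Q.1).roots.toFinset.card := by
        apply Finset.card_le_card
        intro x hxmem
        simp only [Finset.mem_filter] at hxmem
        rw [Multiset.mem_toFinset, Polynomial.mem_roots hne]
        simp [Polynomial.IsRoot, sub_eq_zero, hxmem.2]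
    _ ≤ Multiset.card (P.1 - Q.1).roots := Multiset.toFinset_card_le _
    _ ≤ (P.1 - Q.1).natDegree := Polynomial.card_roots' _
    _ ≤ r := hdeg

lemma norm_sq_cast (z : ℂ) : ((‖z‖ ^ 2 : ℝ) : ℂ) = (starRingEnd ℂ) z * z := by
  rw [mul_comm, Complex.mul_conj, Complex.sq_norm]

/-- The off-diagonal absolute sum bound via the support cardinality. -/
lemma offdiag_sum_le {ι : Type*} [Fintype ι] [DecidableEq ι] (a : ι → ℝ)
    (ha : ∀ i, 0 ≤ a i) (S : Finset ι) (hS : ∀ i, i ∉ S → a i = 0) (L : ℕ)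
    (hcard : S.card ≤ L) :
    (∑ i, ∑ j ∈ Finset.univ.erase i, a i * a j) ≤ ((L : ℝ) - 1) * ∑ i, a i ^ 2 := by
  have hrestrict : (∑ i, ∑ j ∈ Finset.univ.erase i, a i * a j)
      = ∑ i ∈ S, ∑ j ∈ S.erase i, a i * a j := by
    rw [← Finset.sum_subset (Finset.subset_univ S)
      (fun i _ hi => by simp [hS i hi, Finset.sum_const_zero])]
    refine Finset.sum_congr rfl fun i hi => ?_
    rw [← Finset.sum_subset (Finset.erase_subset_erase i (Finset.subset_univ S))
      (fun j hj hjS => ?_)]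
    have : j ∉ S := fun hmem => hjS (Finset.mem_erase.mpr ⟨(Finset.mem_erase.mp hj).1, hmem⟩)
    simp [hS j this]
  rw [hrestrict]
  have hinner : ∀ i ∈ S, (∑ j ∈ S.erase i, a i * a j)
      = a i * ((∑ j ∈ S, a j) - a i) := by
    intro i hi
    rw [← Finset.mul_sum, Finset.sum_erase_eq_sub hi]
  rw [Finset.sum_congr rfl hinner]
  have hCS : (∑ i ∈ S, a i) ^ 2 ≤ (S.card : ℝ) * ∑ i ∈ S, a i ^ 2 :=
    sq_sum_le_card_mul_sum_sq
  have hexp : (∑ i ∈ S, a i * ((∑ j ∈ S, a j) - a i))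
      = (∑ i ∈ S, a i) ^ 2 - ∑ i ∈ S, a i ^ 2 := by
    simp only [mul_sub]
    rw [Finset.sum_sub_distrib, ← Finset.sum_mul, sq]
    congr 1
    exact Finset.sum_congr rfl fun i _ => by ring
  rw [hexp]
  have hequal : ∑ i, a i ^ 2 = ∑ i ∈ S, a i ^ 2 :=
    (Finset.sum_subset (Finset.subset_univ S) fun i _ hi => by simp [hS i hi]).symm
  have hSnonneg : (0:ℝ) ≤ ∑ i ∈ S, a i ^ 2 := Finset.sum_nonneg fun _ _ => sq_nonneg _
  have h1 : (∑ i ∈ S, a i) ^ 2 - ∑ i ∈ S, a i ^ 2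
      ≤ ((S.card : ℝ) - 1) * ∑ i ∈ S, a i ^ 2 := by nlinarith
  have h2 : ((S.card : ℝ) - 1) * ∑ i ∈ S, a i ^ 2 ≤ ((L:ℝ) - 1) * ∑ i ∈ S, a i ^ 2 := by
    apply mul_le_mul_of_nonneg_right _ hSnonneg
    have : (S.card : ℝ) ≤ L := by exact_mod_cast hcard
    linarith
  rw [hequal]
  linarith

end

/-- The column-normalized Kronecker product `S_C = (1/√(q₁q₂)) (U_b ⊗ V_b)` of two
DeVore matrices satisfies the RIP of order `L` with constant
`δ_L = (L−1) · max {r₁/q₁, r₂/q₂}`. -/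
theorem deVore_kron_rip (F₁ F₂ : Type*) [Field F₁] [Fintype F₁] [DecidableEq F₁]
    [Field F₂] [Fintype F₂] [DecidableEq F₂]
    (q₁ q₂ r₁ r₂ : ℕ) (hq₁ : Fintype.card F₁ = q₁) (hq₂ : Fintype.card F₂ = q₂)
    (hr₁ : 1 ≤ r₁) (hrq₁ : r₁ < q₁) (hr₂ : 1 ≤ r₂) (hrq₂ : r₂ < q₂)
    (L : ℕ) (hL : 1 ≤ L)
    (u : {P : Polynomial F₁ // P.degree ≤ (r₁ : WithBot ℕ)} ×
         {P : Polynomial F₂ // P.degree ≤ (r₂ : WithBot ℕ)} → ℂ)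
    (hu : (Function.support u).ncard ≤ L) :
    (1 - ((L : ℝ) - 1) * max ((r₁ : ℝ) / q₁) ((r₂ : ℝ) / q₂)) * vNorm u ^ 2 ≤
        vNorm (Matrix.mulVec
          ((((Real.sqrt (q₁ * q₂ : ℕ) : ℝ) : ℂ))⁻¹ •
            Matrix.kroneckerMap (· * ·) (deVore F₁ r₁) (deVore F₂ r₂)) u) ^ 2 ∧
    vNorm (Matrix.mulVec
          ((((Real.sqrt (q₁ * q₂ : ℕ) : ℝ) : ℂ))⁻¹ •
            Matrix.kroneckerMap (· * ·) (deVore F₁ r₁) (deVore F₂ r₂)) u) ^ 2 ≤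
        (1 + ((L : ℝ) - 1) * max ((r₁ : ℝ) / q₁) ((r₂ : ℝ) / q₂)) * vNorm u ^ 2 := by
  classical
  set μ : ℝ := max ((r₁ : ℝ) / q₁) ((r₂ : ℝ) / q₂) with hμdef
  set K := Matrix.kroneckerMap (· * ·) (deVore F₁ r₁) (deVore F₂ r₂) with hK
  set v := K.mulVec u with hv
  have hq₁pos : 0 < q₁ := lt_of_le_of_lt (Nat.zero_le _) hrq₁
  have hq₂pos : 0 < q₂ := lt_of_le_of_lt (Nat.zero_le _) hrq₂
  set N : ℝ := ((q₁ * q₂ : ℕ) : ℝ) with hNdef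
  have hNpos : 0 < N := by
    rw [hNdef]
    exact_mod_cast Nat.mul_pos hq₁pos hq₂pos
  have hμnonneg : 0 ≤ μ :=
    le_trans (by positivity) (le_max_left _ _)
  have hLμ : 0 ≤ ((L:ℝ) - 1) * μ := by
    have : (1:ℝ) ≤ L := by exact_mod_cast hL
    have := mul_le_mul_of_nonneg_right (by linarith : (0:ℝ) ≤ (L:ℝ) - 1) hμnonneg
    nlinarith
  -- The normalization constant
  have hnorm_scale : vNorm (Matrix.mulVec
      ((((Real.sqrt (q₁ * q₂ : ℕ) : ℝ) : ℂ))⁻¹ • K) u) ^ 2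
      = N⁻¹ * ∑ x, ‖v x‖ ^ 2 := by
    rw [Matrix.smul_mulVec, ← hv, vNorm_sq]
    have hterm : ∀ x, ‖(((Real.sqrt (q₁ * q₂ : ℕ) : ℝ) : ℂ))⁻¹ • v x‖ ^ 2
        = N⁻¹ * ‖v x‖ ^ 2 := by
      intro x
      rw [norm_smul, mul_pow, norm_inv, Complex.norm_real, Real.norm_eq_abs,
        abs_of_nonneg (Real.sqrt_nonneg _), ← Real.sqrt_inv,
        Real.sq_sqrt (inv_nonneg.mpr hNpos.le)]
    calc ∑ x, ‖(((Real.sqrt (q₁ * q₂ : ℕ) : ℝ) : ℂ))⁻¹ • v x‖ ^ 2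
        = ∑ x, N⁻¹ * ‖v x‖ ^ 2 := Finset.sum_congr rfl fun x _ => hterm x
      _ = N⁻¹ * ∑ x, ‖v x‖ ^ 2 := (Finset.mul_sum _ _ _).symm
  -- the Gram counts
  set g : ({P : Polynomial F₁ // P.degree ≤ (r₁ : WithBot ℕ)} ×
           {P : Polynomial F₂ // P.degree ≤ (r₂ : WithBot ℕ)}) →
          ({P : Polynomial F₁ // P.degree ≤ (r₁ : WithBot ℕ)} ×
           {P : Polynomial F₂ // P.degree ≤ (r₂ : WithBot ℕ)}) → ℝ :=
    fun i j => ((Finset.univ.filter fun x : F₁ => i.1.1.eval x = j.1.1.eval x).card : ℝ)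
      * ((Finset.univ.filter fun x : F₂ => i.2.1.eval x = j.2.1.eval x).card : ℝ) with hg
  have hconjK : ∀ x i, (starRingEnd ℂ) (K x i) = K x i := by
    intro x i
    rw [hK]
    simp only [Matrix.kroneckerMap_apply, deVore, Matrix.of_apply, map_mul,
      apply_ite (starRingEnd ℂ), map_one, map_zero]
  have hfac : ∀ i j, (∑ x, K x i * K x j) = ((g i j : ℝ) : ℂ) := by
    intro i j
    rw [hK]
    have : ∀ x : (F₁ × F₁) × (F₂ × F₂),
        Matrix.kroneckerMap (· * ·) (deVore F₁ r₁) (deVore F₂ r₂) x i *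
        Matrix.kroneckerMap (· * ·) (deVore F₁ r₁) (deVore F₂ r₂) x j
        = (deVore F₁ r₁ x.1 i.1 * deVore F₁ r₁ x.1 j.1) *
          (deVore F₂ r₂ x.2 i.2 * deVore F₂ r₂ x.2 j.2) := by
      intro x
      simp only [Matrix.kroneckerMap_apply]
      ring
    rw [Finset.sum_congr rfl fun x _ => this x, Fintype.sum_prod_type]
    simp only [← Finset.sum_mul, ← Finset.mul_sum]
    rw [deVore_gram F₁ r₁ i.1 j.1, deVore_gram F₂ r₂ i.2 j.2]
    simp only [hg]
    push_cast
    ring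
  -- the key identity
  have hkey : ((∑ x, ‖v x‖ ^ 2 : ℝ) : ℂ)
      = ∑ i, ∑ j, (starRingEnd ℂ) (u i) * u j * ((g i j : ℝ) : ℂ) := by
    calc ((∑ x, ‖v x‖ ^ 2 : ℝ) : ℂ)
        = ∑ x, ((‖v x‖ ^ 2 : ℝ) : ℂ) := by norm_cast
      _ = ∑ x, (starRingEnd ℂ) (v x) * v x :=
          Finset.sum_congr rfl fun x _ => norm_sq_cast (v x)
      _ = ∑ x, (∑ i, K x i * (starRingEnd ℂ) (u i)) * (∑ j, K x j * u j) := by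
          refine Finset.sum_congr rfl fun x _ => ?_
          rw [hv]
          simp only [Matrix.mulVec, dotProduct, map_sum, map_mul]
          congr 1
          exact Finset.sum_congr rfl fun i _ => by rw [hconjK]
      _ = ∑ x, ∑ i, ∑ j, (K x i * (starRingEnd ℂ) (u i)) * (K x j * u j) := by
          refine Finset.sum_congr rfl fun x _ => ?_
          rw [Finset.sum_mul_sum]
      _ = ∑ i, ∑ j, ∑ x, (K x i * (starRingEnd ℂ) (u i)) * (K x j * u j) := by
          rw [Finset.sum_comm]
          exact Finset.sum_congr rfl fun i _ => Finset.sum_comm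
      _ = ∑ i, ∑ j, (starRingEnd ℂ) (u i) * u j * (∑ x, K x i * K x j) := by
          refine Finset.sum_congr rfl fun i _ => Finset.sum_congr rfl fun j _ => ?_
          rw [Finset.mul_sum]
          exact Finset.sum_congr rfl fun x _ => by ring
      _ = ∑ i, ∑ j, (starRingEnd ℂ) (u i) * u j * ((g i j : ℝ) : ℂ) := by
          refine Finset.sum_congr rfl fun i _ => Finset.sum_congr rfl fun j _ => ?_
          rw [hfac]
  -- diagonal and off-diagonal values of g
  have hdiag : ∀ i, g i i = N := by
    intro i
    simp only [hg, hNdef]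
    rw [Finset.filter_true, Finset.filter_true, Finset.card_univ, Finset.card_univ, hq₁, hq₂]
    push_cast
    ring
  have hgnonneg : ∀ i j, 0 ≤ g i j := by
    intro i j
    simp only [hg]
    positivity
  have hoff : ∀ i j, i ≠ j → g i j ≤ μ * N := by
    intro i j hij
    have hb₁ : ((Finset.univ.filter fun x : F₁ => i.1.1.eval x = j.1.1.eval x).card : ℝ) ≤ q₁ := by
      have := Finset.card_filter_le (Finset.univ : Finset F₁)
        (fun x : F₁ => i.1.1.eval x = j.1.1.eval x)
      rw [Finset.card_univ, hq₁] at this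
      exact_mod_cast this
    have hb₂ : ((Finset.univ.filter fun x : F₂ => i.2.1.eval x = j.2.1.eval x).card : ℝ) ≤ q₂ := by
      have := Finset.card_filter_le (Finset.univ : Finset F₂)
        (fun x : F₂ => i.2.1.eval x = j.2.1.eval x)
      rw [Finset.card_univ, hq₂] at this
      exact_mod_cast this
    have hnn₁ : (0:ℝ) ≤ ((Finset.univ.filter fun x : F₁ => i.1.1.eval x = j.1.1.eval x).card : ℝ) := by positivity
    have hnn₂ : (0:ℝ) ≤ ((Finset.univ.filter fun x : F₂ => i.2.1.eval x = j.2.1.eval x).card : ℝ) := by positivity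
    have hNeq : N = (q₁ : ℝ) * q₂ := by rw [hNdef]; push_cast; ring
    by_cases h1 : i.1 = j.1
    · have h2 : i.2 ≠ j.2 := fun h2 => hij (Prod.ext h1 h2)
      have hc₂ : ((Finset.univ.filter fun x : F₂ => i.2.1.eval x = j.2.1.eval x).card : ℝ) ≤ r₂ := by
        exact_mod_cast deVore_count_ne i.2 j.2 h2
      have : g i j ≤ (q₁ : ℝ) * r₂ := by
        simp only [hg]
        exact mul_le_mul hb₁ hc₂ hnn₂ (by positivity)
      have heq : ((r₂:ℝ)/q₂) * N = (q₁ : ℝ) * r₂ := by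
        rw [hNeq]
        field_simp
      calc g i j ≤ (q₁ : ℝ) * r₂ := this
        _ = ((r₂:ℝ)/q₂) * N := heq.symm
        _ ≤ μ * N := mul_le_mul_of_nonneg_right (le_max_right _ _) hNpos.le
    · have hc₁ : ((Finset.univ.filter fun x : F₁ => i.1.1.eval x = j.1.1.eval x).card : ℝ) ≤ r₁ := by
        exact_mod_cast deVore_count_ne i.1 j.1 h1
      have : g i j ≤ (r₁ : ℝ) * q₂ := by
        simp only [hg]
        exact mul_le_mul hc₁ hb₂ hnn₂ (by positivity)
      have heq : ((r₁:ℝ)/q₁) * N = (r₁ : ℝ) * q₂ := by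
        rw [hNeq]
        field_simp
      calc g i j ≤ (r₁ : ℝ) * q₂ := this
        _ = ((r₁:ℝ)/q₁) * N := heq.symm
        _ ≤ μ * N := mul_le_mul_of_nonneg_right (le_max_left _ _) hNpos.le
  -- split off the diagonal
  set E : ℂ := ∑ i, ∑ j ∈ Finset.univ.erase i, (starRingEnd ℂ) (u i) * u j * ((g i j : ℝ) : ℂ)
    with hE
  have hsplit : ((∑ x, ‖v x‖ ^ 2 : ℝ) : ℂ) = ((N * ∑ i, ‖u i‖ ^ 2 : ℝ) : ℂ) + E := by
    rw [hkey]
    have : ∀ i : _, (∑ j, (starRingEnd ℂ) (u i) * u j * ((g i j : ℝ) : ℂ))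
        = (starRingEnd ℂ) (u i) * u i * ((g i i : ℝ) : ℂ)
          + ∑ j ∈ Finset.univ.erase i, (starRingEnd ℂ) (u i) * u j * ((g i j : ℝ) : ℂ) :=
      fun i => (Finset.add_sum_erase _ _ (Finset.mem_univ i)).symm
    rw [Finset.sum_congr rfl fun i _ => this i, Finset.sum_add_distrib, hE]
    congr 1
    calc ∑ i, (starRingEnd ℂ) (u i) * u i * ((g i i : ℝ) : ℂ)
        = ∑ i, ((‖u i‖ ^ 2 : ℝ) : ℂ) * ((N : ℝ) : ℂ) :=
          Finset.sum_congr rfl fun i _ => by rw [hdiag i, ← norm_sq_cast]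
      _ = ((N * ∑ i, ‖u i‖ ^ 2 : ℝ) : ℂ) := by
          rw [← Finset.sum_mul]
          push_cast
          ring
  have hEre : E.re = (∑ x, ‖v x‖ ^ 2) - N * ∑ i, ‖u i‖ ^ 2 := by
    have := congrArg Complex.re hsplit
    simp only [Complex.ofReal_re, Complex.add_re] at this
    linarith
  -- bound ‖E‖
  have hufin : (Function.support u).Finite := Set.toFinite _
  have hScard : hufin.toFinset.card ≤ L := by
    rwa [Set.ncard_eq_toFinset_card _ hufin] at hu
  have hT : (∑ i, ∑ j ∈ Finset.univ.erase i, ‖u i‖ * ‖u j‖)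
      ≤ ((L:ℝ) - 1) * ∑ i, ‖u i‖ ^ 2 := by
    refine offdiag_sum_le (fun i => ‖u i‖) (fun i => norm_nonneg _)
      hufin.toFinset (fun i hi => ?_) L hScard
    rw [Set.Finite.mem_toFinset, Function.mem_support, not_not] at hi
    simp [hi]
  have hEbound : ‖E‖ ≤ μ * N * (((L:ℝ) - 1) * ∑ i, ‖u i‖ ^ 2) := by
    rw [hE]
    calc ‖∑ i, ∑ j ∈ Finset.univ.erase i, (starRingEnd ℂ) (u i) * u j * ((g i j : ℝ) : ℂ)‖ ≤ ∑ i, ‖∑ j ∈ Finset.univ.erase i, (starRingEnd ℂ) (u i) * u j * ((g i j : ℝ) : ℂ)‖ :=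
          norm_sum_le _ _
      _ ≤ ∑ i, ∑ j ∈ Finset.univ.erase i, ‖(starRingEnd ℂ) (u i) * u j * ((g i j : ℝ) : ℂ)‖ :=
          Finset.sum_le_sum fun i _ => norm_sum_le _ _
      _ ≤ ∑ i, ∑ j ∈ Finset.univ.erase i, ‖u i‖ * ‖u j‖ * (μ * N) := by
          refine Finset.sum_le_sum fun i _ => Finset.sum_le_sum fun j hj => ?_
          rw [norm_mul, norm_mul, RCLike.norm_conj]
          have hij : i ≠ j := (Finset.ne_of_mem_erase hj).symm
          have : ‖((g i j : ℝ) : ℂ)‖ = g i j := by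
            rw [Complex.norm_real, Real.norm_eq_abs, abs_of_nonneg (hgnonneg i j)]
          rw [this]
          exact mul_le_mul_of_nonneg_left (hoff i j hij) (by positivity)
      _ = (∑ i, ∑ j ∈ Finset.univ.erase i, ‖u i‖ * ‖u j‖) * (μ * N) := by
          rw [Finset.sum_mul]
          exact Finset.sum_congr rfl fun i _ => (Finset.sum_mul _ _ _).symm
      _ ≤ (((L:ℝ) - 1) * ∑ i, ‖u i‖ ^ 2) * (μ * N) := by
          apply mul_le_mul_of_nonneg_right hT (by positivity)
      _ = μ * N * (((L:ℝ) - 1) * ∑ i, ‖u i‖ ^ 2) := by ring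
  have hEre_abs : |E.re| ≤ μ * N * (((L:ℝ) - 1) * ∑ i, ‖u i‖ ^ 2) :=
    le_trans (Complex.abs_re_le_norm E) hEbound
  -- put it together
  have husq : vNorm u ^ 2 = ∑ i, ‖u i‖ ^ 2 := vNorm_sq u
  rw [hnorm_scale, husq]
  set Su : ℝ := ∑ i, ‖u i‖ ^ 2 with hSu
  have hN0 : N ≠ 0 := hNpos.ne'
  have hfinal : N⁻¹ * ∑ x, ‖v x‖ ^ 2 = Su + N⁻¹ * E.re := by
    rw [hEre]
    field_simp
    ring
  rw [hfinal]
  rw [abs_le] at hEre_abs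
  have hbnd : N⁻¹ * (μ * N * (((L:ℝ) - 1) * Su)) = ((L:ℝ) - 1) * μ * Su := by
    field_simp
  have hNinv : (0:ℝ) < N⁻¹ := by positivity
  constructor
  · have := mul_le_mul_of_nonneg_left hEre_abs.1 hNinv.le
    rw [mul_neg, hbnd] at this
    nlinarith
  · have := mul_le_mul_of_nonneg_left hEre_abs.2 hNinv.le
    rw [hbnd] at this
    nlinarith
end
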